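/- Let d = 1 and let η : ℤ → ℕ be the configuration with η(n) = 3 for n even and η(n) = 1 for n odd (the alternating configuration 313131…, of density 2). Then η is not stabilizable; the same holds for its shift, with η(n) = 1 for n even and η(n) = 3 for n odd. -/
import Mathlib


open MeasureTheory
open scoped ENNReal

/-- Nearest-neighbour adjacency on `ℤ^d`: `|x - y| = 1`. -/
def adj (d : ℕ) (x y : Fin d → ℤ) : Prop := (∑ i, (x i - y i).natAbs) = 1

instance (d : ℕ) (x y : Fin d → ℤ) : Decidable (adj d x y) := by
  unfold adj; infer_instance

/-- The finite-volume toppling operator `(Δ_V m)(x)`, for `x ∈ V`. -/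
def lapV (d : ℕ) (V : Finset (Fin d → ℤ)) (m : (Fin d → ℤ) → ℕ) (x : Fin d → ℤ) : ℤ :=
  2 * d * (m x : ℤ) - ∑ y ∈ V.filter (fun y => adj d x y), (m y : ℤ)

/-- `m` is a vector of toppling numbers making `η` stable in `V`:
`η(x) - (Δ_V m)(x) ≤ 2d` for all `x ∈ V`. -/
def Stabilizes (d : ℕ) (V : Finset (Fin d → ℤ)) (η m : (Fin d → ℤ) → ℕ) : Prop :=
  ∀ x ∈ V, (η x : ℤ) - lapV d V m x ≤ 2 * d

/-- `m` is the pointwise least (on `V`) vector of toppling numbers stabilizing `η` in `V`,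
i.e. `m = m_V^η` on `V`. -/
def IsMinStab (d : ℕ) (V : Finset (Fin d → ℤ)) (η m : (Fin d → ℤ) → ℕ) : Prop :=
  Stabilizes d V η m ∧ ∀ m', Stabilizes d V η m' → ∀ x ∈ V, m x ≤ m' x

/-- `η` is stabilizable: for every `x`, `sup_V m_V^η(x) < ∞`. -/
def Stabilizable (d : ℕ) (η : (Fin d → ℤ) → ℕ) : Prop :=
  ∀ x : Fin d → ℤ, ∃ C : ℕ, ∀ (V : Finset (Fin d → ℤ)) (m : (Fin d → ℤ) → ℕ),
    IsMinStab d V η m → x ∈ V → m x ≤ C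

/-- The set `𝒮` of stabilizable configurations. -/
def StabSet (d : ℕ) : Set ((Fin d → ℤ) → ℕ) := {η | Stabilizable d η}

/-- The set of height configurations (all heights at least `1`). -/
def Heights (d : ℕ) : Set ((Fin d → ℤ) → ℕ) := {η | ∀ x, 1 ≤ η x}

/-- The coordinate shift `τ_z η (x) = η (x + z)`. -/
def shiftC (d : ℕ) (z : Fin d → ℤ) (η : (Fin d → ℤ) → ℕ) : (Fin d → ℤ) → ℕ :=
  fun x => η (x + z)

/-- `ν` is stationary (translation invariant). -/
def Stationary (d : ℕ) (ν : Measure ((Fin d → ℤ) → ℕ)) : Prop :=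
  ∀ z : Fin d → ℤ, MeasurePreserving (shiftC d z) ν ν

/-- `ν` is ergodic under the shift action: shift-invariant Borel sets are trivial. -/
def ErgodicShift (d : ℕ) (ν : Measure ((Fin d → ℤ) → ℕ)) : Prop :=
  ∀ A : Set ((Fin d → ℤ) → ℕ), MeasurableSet A → (∀ z, shiftC d z ⁻¹' A = A) →
    ν A = 0 ∨ ν A = 1


namespace AltPf

def ι : ℤ → (Fin 1 → ℤ) := fun n _ => n

lemma ι_inj : Function.Injective ι := fun a b h => congrFun h 0

def emb : ℤ ↪ (Fin 1 → ℤ) := ⟨ι, ι_inj⟩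

lemma eq_ι (x : Fin 1 → ℤ) : ι (x 0) = x := by
  funext i
  have hi : i = 0 := Subsingleton.elim i 0
  rw [hi]; rfl

lemma mem_map_iff (I : Finset ℤ) (x : Fin 1 → ℤ) : x ∈ I.map emb ↔ x 0 ∈ I := by
  simp only [Finset.mem_map]
  constructor
  · rintro ⟨b, hb, rfl⟩; exact hb
  · intro h; exact ⟨x 0, h, eq_ι x⟩

lemma adj_ι (a b : ℤ) : adj 1 (ι a) (ι b) ↔ (a - b).natAbs = 1 := by
  simp [adj, ι]

lemma sum_adj (I : Finset ℤ) (F : ℤ → ℤ) (hF : ∀ b ∉ I, F b = 0) (a : ℤ) :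
    ∑ y ∈ (I.map emb).filter (fun y => adj 1 (ι a) y), F (y 0) = F (a - 1) + F (a + 1) := by
  rw [Finset.filter_map, Finset.sum_map]
  have h1 : I.filter (fun b => adj 1 (ι a) (emb b)) =
      ({a - 1, a + 1} : Finset ℤ).filter (fun b => b ∈ I) := by
    ext b
    simp only [Finset.mem_filter, Finset.mem_insert, Finset.mem_singleton, emb,
      Function.Embedding.coeFn_mk, adj_ι]
    constructor
    · rintro ⟨hb, h⟩; exact ⟨by omega, hb⟩
    · rintro ⟨h, hb⟩; exact ⟨hb, by omega⟩
  have h2 : ((I.filter (fun b => (adj 1 (ι a) ∘ emb) b))) = I.filter (fun b => adj 1 (ι a) (emb b)) := rfl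
  have he : ∀ b : ℤ, (emb b) 0 = b := fun _ => rfl
  rw [h2, h1, Finset.sum_filter, Finset.sum_insert (by simp; omega), Finset.sum_singleton]
  simp only [he]
  split_ifs with h3 h4 h4
  · rfl
  · rw [hF _ h4]
  · rw [hF _ h3]
  · rw [hF _ h3, hF _ h4]

lemma min_lemma (I : Finset ℤ) (g : ℤ → ℤ) (z : ℤ) (f : ℤ → ℕ) (M : ℤ → ℤ)
    (hf0 : ∀ b ∉ I, f b = 0) (hM0 : ∀ b ∉ I, M b = 0) (hMnn : ∀ b, 0 ≤ M b)
    (heq : ∀ a ∈ I, 2 * (f a : ℤ) = g a + f (a-1) + f (a+1) + (if a = z then 1 else 0))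
    (hM : ∀ a ∈ I, g a + M (a-1) + M (a+1) ≤ 2 * M a) :
    ∀ a ∈ I, (f a : ℤ) ≤ M a := by
  by_contra hcon
  push_neg at hcon
  obtain ⟨b0, hb0I, hb0⟩ := hcon
  set D : ℤ → ℤ := fun a => (f a : ℤ) - M a with hD
  have hIne : I.Nonempty := ⟨b0, hb0I⟩
  have hNe : (I.image D).Nonempty := hIne.image D
  set Dm := (I.image D).max' hNe with hDm
  have hle : ∀ a ∈ I, D a ≤ Dm := fun a ha => Finset.le_max' _ _ (Finset.mem_image_of_mem D ha)
  have hDmpos : 0 < Dm := lt_of_lt_of_le (by simp only [hD]; omega) (hle b0 hb0I)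
  obtain ⟨aw, hawI, haw⟩ : ∃ a ∈ I, D a = Dm := by
    have := (I.image D).max'_mem hNe
    rw [← hDm, Finset.mem_image] at this
    exact this
  set W := I.filter (fun a => D a = Dm) with hWdef
  have hWne : W.Nonempty := ⟨aw, Finset.mem_filter.2 ⟨hawI, haw⟩⟩
  set a0 := W.max' hWne with ha0
  set a1 := W.min' hWne with ha1
  have ha0W : a0 ∈ W := W.max'_mem hWne
  have ha1W : a1 ∈ W := W.min'_mem hWne
  have ha0I : a0 ∈ I := (Finset.mem_filter.1 ha0W).1
  have ha1I : a1 ∈ I := (Finset.mem_filter.1 ha1W).1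
  have ha0D : D a0 = Dm := (Finset.mem_filter.1 ha0W).2
  have ha1D : D a1 = Dm := (Finset.mem_filter.1 ha1W).2
  have hub : ∀ b, D b ≤ Dm := by
    intro b
    by_cases hb : b ∈ I
    · exact hle b hb
    · simp only [hD, hf0 b hb, hM0 b hb]; omega
  have key : ∀ a ∈ I, 2 * D a ≤ D (a-1) + D (a+1) + (if a = z then 1 else 0) := by
    intro a ha
    have h1 := heq a ha
    have h2 := hM a ha
    simp only [hD]
    omega
  have hsucc : D (a0 + 1) ≤ Dm - 1 := by
    by_cases hb : a0 + 1 ∈ I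
    · have h1 := hle _ hb
      have h2 : D (a0 + 1) ≠ Dm := by
        intro h
        have : a0 + 1 ∈ W := Finset.mem_filter.2 ⟨hb, h⟩
        have := W.le_max' _ this
        omega
      omega
    · simp only [hD, hf0 _ hb, hM0 _ hb]; omega
  have hpred : D (a1 - 1) ≤ Dm - 1 := by
    by_cases hb : a1 - 1 ∈ I
    · have h1 := hle _ hb
      have h2 : D (a1 - 1) ≠ Dm := by
        intro h
        have : a1 - 1 ∈ W := Finset.mem_filter.2 ⟨hb, h⟩
        have := W.min'_le _ this
        omega
      omega
    · simp only [hD, hf0 _ hb, hM0 _ hb]; omega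
  have ha0z : a0 = z := by
    by_contra hne
    have := key a0 ha0I
    rw [if_neg hne] at this
    have := hub (a0 - 1)
    omega
  have ha1z : a1 = z := by
    by_contra hne
    have := key a1 ha1I
    rw [if_neg hne] at this
    have := hub (a1 + 1)
    omega
  have := key z (ha0z ▸ ha0I)
  rw [if_pos rfl] at this
  have h1 : D (z - 1) ≤ Dm - 1 := ha1z ▸ hpred
  have h2 : D (z + 1) ≤ Dm - 1 := ha0z ▸ hsucc
  have h3 : D z = Dm := ha0z ▸ ha0D
  omega

/-- The explicit odometer, centered at `s`, of radius `2C`. -/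
def fs (C : ℕ) (s : ℤ) (a : ℤ) : ℕ :=
  if (a - s).natAbs ≤ 2 * C then (2 * C + 2 - (a - s).natAbs) / 2 else 0

lemma fs_zero (C : ℕ) (s a : ℤ) (h : a ∉ Finset.Icc (s - 2*C) (s + 2*C)) : fs C s a = 0 := by
  rw [Finset.mem_Icc] at h
  rw [fs, if_neg (by omega)]

lemma fs_eq (C : ℕ) (s : ℤ) (a : ℤ) (ha : a ∈ Finset.Icc (s - 2*C) (s + 2*C)) :
    2 * (fs C s a : ℤ) = (if (a - s) % 2 = 0 then 1 else -1)
      + fs C s (a-1) + fs C s (a+1) + (if a = s then 1 else 0) := by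
  rw [Finset.mem_Icc] at ha
  simp only [fs]
  split_ifs <;> omega

lemma fs_self (C : ℕ) (s : ℤ) : fs C s s = C + 1 := by
  simp only [fs, sub_self, Int.natAbs_zero]
  rw [if_pos (Nat.zero_le _)]
  omega

lemma not_stab (s : ℤ) (η : (Fin 1 → ℤ) → ℕ)
    (hη : ∀ a : ℤ, (η (ι a) : ℤ) = (if (a - s) % 2 = 0 then 1 else -1) + 2) :
    ¬ Stabilizable 1 η := by
  intro h
  obtain ⟨C, hC⟩ := h (ι s)
  set I := Finset.Icc (s - 2*C) (s + 2*C) with hI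
  set V := I.map emb with hV
  set m : (Fin 1 → ℤ) → ℕ := fun x => fs C s (x 0) with hm
  have hsI : s ∈ I := by rw [hI, Finset.mem_Icc]; omega
  have hstab : Stabilizes 1 V η m := by
    intro x hx
    rw [mem_map_iff] at hx
    rw [← eq_ι x]
    have hsum := sum_adj I (fun b => ((fs C s b : ℕ) : ℤ))
      (fun b hb => by simp [fs_zero C s b hb]) (x 0)
    have hmx : m (ι (x 0)) = fs C s (x 0) := rfl
    have hl : lapV 1 V m (ι (x 0)) =
        2 * (fs C s (x 0) : ℤ) - ((fs C s (x 0 - 1) : ℤ) + (fs C s (x 0 + 1) : ℤ)) := by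
      rw [lapV, hsum, hmx]; push_cast; ring
    rw [hl, hη (x 0)]
    have he := fs_eq C s (x 0) hx
    have hδ : (0:ℤ) ≤ (if x 0 = s then 1 else 0) := by split_ifs <;> norm_num
    push_cast
    linarith
  have hmin : ∀ m', Stabilizes 1 V η m' → ∀ x ∈ V, m x ≤ m' x := by
    intro m' hm' x hx
    rw [mem_map_iff] at hx
    set M : ℤ → ℤ := fun b => if b ∈ I then (m' (ι b) : ℤ) else 0 with hM
    have hM0 : ∀ b ∉ I, M b = 0 := by
      intro b hb
      show (if b ∈ I then (m' (ι b) : ℤ) else 0) = 0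
      rw [if_neg hb]
    have hMnn : ∀ b, 0 ≤ M b := by
      intro b
      show 0 ≤ (if b ∈ I then (m' (ι b) : ℤ) else 0)
      split_ifs
      · positivity
      · exact le_refl 0
    have hMstab : ∀ a ∈ I,
        (if (a - s) % 2 = 0 then (1:ℤ) else -1) + M (a-1) + M (a+1) ≤ 2 * M a := by
      intro a ha
      have hx' : ι a ∈ V := (mem_map_iff I (ι a)).2 ha
      have h2 := hm' (ι a) hx'
      have hsum : ∑ y ∈ V.filter (fun y => adj 1 (ι a) y), ((m' y : ℕ) : ℤ)
          = M (a-1) + M (a+1) := by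
        have h3 : ∀ y ∈ V.filter (fun y => adj 1 (ι a) y), ((m' y : ℕ) : ℤ) = M (y 0) := by
          intro y hy
          have hyV : y ∈ V := (Finset.mem_filter.1 hy).1
          rw [mem_map_iff] at hyV
          show ((m' y : ℕ) : ℤ) = (if (y 0) ∈ I then (m' (ι (y 0)) : ℤ) else 0)
          rw [if_pos hyV, eq_ι]
        rw [Finset.sum_congr rfl h3]
        exact sum_adj I M hM0 a
      have hl : lapV 1 V m' (ι a) = 2 * ((m' (ι a) : ℕ) : ℤ) - (M (a-1) + M (a+1)) := by
        rw [lapV, hsum]; push_cast; ring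
      rw [hl, hη a] at h2
      have hMa : M a = ((m' (ι a) : ℕ) : ℤ) := by
        show (if a ∈ I then (m' (ι a) : ℤ) else 0) = _
        rw [if_pos ha]
      rw [hMa]
      push_cast at h2 ⊢
      linarith
    have h5 := min_lemma I (fun a => if (a - s) % 2 = 0 then (1:ℤ) else -1) s (fs C s) M
      (fs_zero C s) hM0 hMnn (fun a ha => fs_eq C s a ha) hMstab (x 0) hx
    have hMx : M (x 0) = ((m' x : ℕ) : ℤ) := by
      show (if (x 0) ∈ I then (m' (ι (x 0)) : ℤ) else 0) = _
      rw [if_pos hx, eq_ι]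
    rw [hMx] at h5
    exact_mod_cast h5
  have hfin := hC V m ⟨hstab, hmin⟩ ((mem_map_iff I (ι s)).2 hsI)
  have hms : m (ι s) = C + 1 := fs_self C s
  omega

end AltPf

/-- in dimension 1, the alternating configuration `313131...` and its shift
`131313...` are not stabilizable. -/
theorem alternating_31_not_stabilizable :
    ¬ Stabilizable 1 (fun x : Fin 1 → ℤ => if Even (x 0) then 3 else 1) ∧
    ¬ Stabilizable 1 (fun x : Fin 1 → ℤ => if Even (x 0) then 1 else 3) := by
  constructor
  · apply AltPf.not_stab 0
    intro a
    show ((if Even a then (3:ℕ) else 1 : ℕ) : ℤ) = _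
    rcases Int.even_or_odd a with he | ho
    · have h2 : a % 2 = 0 := Int.even_iff.mp he
      rw [if_pos he, if_pos (by omega : (a - 0) % 2 = 0)]; norm_num
    · have h2 : a % 2 = 1 := Int.odd_iff.mp ho
      rw [if_neg (by rwa [Int.not_even_iff_odd]), if_neg (by omega : ¬ (a - 0) % 2 = 0)]
      norm_num
  · apply AltPf.not_stab 1
    intro a
    show ((if Even a then (1:ℕ) else 3 : ℕ) : ℤ) = _
    rcases Int.even_or_odd a with he | ho
    · have h2 : a % 2 = 0 := Int.even_iff.mp he
      rw [if_pos he, if_neg (by omega : ¬ (a - 1) % 2 = 0)]; norm_num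
    · have h2 : a % 2 = 1 := Int.odd_iff.mp ho
      rw [if_neg (by rwa [Int.not_even_iff_odd]), if_pos (by omega : (a - 1) % 2 = 0)]
      norm_num
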